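/- The Monna map ρ : ℚ_p → ℝ_{≥0}, sending Σ_{i≥γ} x_i p^i to Σ_{i≥γ} x_i p^{−i−1}, satisfies the Hölder-type inequality |ρ(x) − ρ(y)| ≤ |x−y|_p for all x, y ∈ ℚ_p. -/

import Mathlib

open scoped Classical
open MeasureTheory

noncomputable instance (p : ℕ) [Fact p.Prime] : MeasurableSpace ℚ_[p] := borel _

/-- The unit part of a nonzero `p`-adic number: `x * p^(-v_p(x))`, a `p`-adic unit. -/
noncomputable def padicUnitPart (p : ℕ) [Fact p.Prime] (x : ℚ_[p]) : ℤ_[p] :=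
  if hx : x = 0 then 0
  else ⟨x * (p : ℚ_[p]) ^ (-x.valuation), by
    have hp : (1 : ℝ) < p := Nat.one_lt_cast.mpr (Fact.out (p := p.Prime)).one_lt
    rw [norm_mul, Padic.norm_eq_zpow_neg_valuation hx, Padic.norm_p_zpow, neg_neg,
      ← zpow_add₀ (by positivity : (p : ℝ) ≠ 0)]
    simp⟩

/-- The `i`-th digit of the `p`-adic expansion `x = ∑ x_i p^i`. -/
noncomputable def padicDigit (p : ℕ) [Fact p.Prime] (x : ℚ_[p]) (i : ℤ) : ℕ :=
  if x = 0 then 0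
  else if x.valuation ≤ i then
    ((padicUnitPart p x).appr ((i - x.valuation).toNat + 1)
      - (padicUnitPart p x).appr (i - x.valuation).toNat) / p ^ (i - x.valuation).toNat
  else 0

/-- The `p`-adic fractional part `{x}_p = ∑_{i<0} x_i p^i`, a rational number. -/
noncomputable def padicFract (p : ℕ) [Fact p.Prime] (x : ℚ_[p]) : ℚ :=
  ∑ i ∈ Finset.Ico x.valuation 0, (padicDigit p x i : ℚ) * (p : ℚ) ^ i

/-- `x` is the canonical representative of its coset in `ℚ_p/ℤ_p`. -/
def IsPadicRep (p : ℕ) [Fact p.Prime] (n : ℚ_[p]) : Prop :=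
  ((padicFract p n : ℚ) : ℚ_[p]) = n

/-- The standard additive character `χ(x) = exp(2πi {x}_p)` on `ℚ_p`. -/
noncomputable def padicChar (p : ℕ) [Fact p.Prime] (x : ℚ_[p]) : ℂ :=
  Complex.exp (2 * Real.pi * Complex.I * ((padicFract p x : ℚ) : ℂ))

/-- The Monna map `ρ : ℚ_p → [0,∞)`, `∑ x_i p^i ↦ ∑ x_i p^(-i-1)`. -/
noncomputable def monna (p : ℕ) [Fact p.Prime] (x : ℚ_[p]) : ℝ :=
  ∑' i : ℤ, (padicDigit p x i : ℝ) * (p : ℝ) ^ (-i - 1)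

/-- The basic `p`-adic wavelet `ψ(x) = χ(p⁻¹ x) Ω(|x|_p)`. -/
noncomputable def padicPsi (p : ℕ) [Fact p.Prime] (x : ℚ_[p]) : ℂ :=
  if ‖x‖ ≤ 1 then padicChar p ((p : ℚ_[p])⁻¹ * x) else 0

/-- The `p`-adic wavelet `ψ_{γ,n,j}`. -/
noncomputable def padicWavelet (p : ℕ) [Fact p.Prime] (γ : ℤ) (n : ℚ_[p]) (j : ℕ)
    (x : ℚ_[p]) : ℂ :=
  if ‖(p : ℚ_[p]) ^ γ * x - n‖ ≤ 1 then
    (((p : ℝ) ^ (-(γ : ℝ) / 2) : ℝ) : ℂ) *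
      padicChar p ((p : ℚ_[p]) ^ (γ - 1) * (j : ℚ_[p]) * (x - (p : ℚ_[p]) ^ (-γ) * n))
  else 0

/-- Translation-dilation `ψ^{a,b}(x) = |a|_p^{-1/2} ψ((x-b)/a)` of the wavelet `ψ`. -/
noncomputable def padicPsiTransDil (p : ℕ) [Fact p.Prime] (a b : ℚ_[p]) (x : ℚ_[p]) : ℂ :=
  ((‖a‖ ^ (-(1 : ℝ) / 2) : ℝ) : ℂ) * padicPsi p ((x - b) / a)


section MonnaHolderAux

variable {p : ℕ} [hp : Fact p.Prime]

private lemma mh_one_lt_p : (1:ℝ) < p := Nat.one_lt_cast.mpr hp.out.one_lt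

private lemma mh_p_pos : (0:ℝ) < p := lt_trans one_pos mh_one_lt_p

/-- `appr` at level `n` only depends on the coset mod `p^n`. -/
private lemma mh_appr_eq_appr (u w : ℤ_[p]) (n : ℕ) (h : ‖u - w‖ ≤ (p:ℝ) ^ (-n : ℤ)) :
    u.appr n = w.appr n := by
  rw [PadicInt.norm_le_pow_iff_mem_span_pow] at h
  have h1 := PadicInt.appr_spec n u
  have h2 := PadicInt.appr_spec n w
  have hm : ((u.appr n : ℤ_[p]) - (w.appr n : ℤ_[p])) ∈ Ideal.span {(p : ℤ_[p]) ^ n} := by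
    have e : (u.appr n : ℤ_[p]) - (w.appr n : ℤ_[p]) =
        (w - w.appr n) - (u - u.appr n) + (u - w) := by ring
    rw [e]
    exact Ideal.add_mem _ (Ideal.sub_mem _ h2 h1) h
  rw [Ideal.mem_span_singleton] at hm
  have hdvd : ((p:ℤ)) ^ n ∣ (u.appr n : ℤ) - (w.appr n : ℤ) := by
    refine (PadicInt.pow_p_dvd_int_iff n _).mp ?_
    convert hm using 1
    push_cast
    ring
  have h1' : (u.appr n : ℤ) < (p:ℤ) ^ n := by exact_mod_cast PadicInt.appr_lt u n
  have h2' : (w.appr n : ℤ) < (p:ℤ) ^ n := by exact_mod_cast PadicInt.appr_lt w n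
  have h0u : (0:ℤ) ≤ (u.appr n : ℤ) := Int.natCast_nonneg _
  have h0w : (0:ℤ) ≤ (w.appr n : ℤ) := Int.natCast_nonneg _
  have hz := Int.eq_zero_of_abs_lt_dvd hdvd (by
    rw [abs_sub_lt_iff]
    constructor <;> linarith)
  have : (u.appr n : ℤ) = (w.appr n : ℤ) := by linarith
  exact_mod_cast this

private lemma mh_digit_lt (x : ℚ_[p]) (i : ℤ) : padicDigit p x i < p := by
  unfold padicDigit
  split_ifs with h1 h2
  · exact hp.out.pos
  · have hlt : (padicUnitPart p x).appr ((i - x.valuation).toNat + 1)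
        - (padicUnitPart p x).appr (i - x.valuation).toNat < p ^ ((i - x.valuation).toNat + 1) :=
      lt_of_le_of_lt (Nat.sub_le _ _) (PadicInt.appr_lt _ _)
    rw [Nat.div_lt_iff_lt_mul (pow_pos hp.out.pos _)]
    calc _ < p ^ ((i - x.valuation).toNat + 1) := hlt
    _ = p * p ^ (i - x.valuation).toNat := by ring
  · exact hp.out.pos

private lemma mh_digit_zero (x : ℚ_[p]) (i : ℤ) (hi : i < x.valuation) : padicDigit p x i = 0 := by
  unfold padicDigit
  split_ifs with h1 h2
  · rfl
  · exact absurd h2 (not_le.mpr hi)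
  · rfl

private lemma mh_digit_zero_of_norm (x : ℚ_[p]) (m i : ℤ) (h : ‖x‖ ≤ (p:ℝ) ^ (-m)) (hi : i < m) :
    padicDigit p x i = 0 := by
  by_cases hx : x = 0
  · simp [padicDigit, hx]
  · apply mh_digit_zero
    rw [Padic.norm_eq_zpow_neg_valuation hx] at h
    have : -x.valuation ≤ -m :=
      (zpow_le_zpow_iff_right₀ mh_one_lt_p).mp h
    omega

private lemma mh_unitPart_coe (x : ℚ_[p]) (hx : x ≠ 0) :
    ((padicUnitPart p x : ℤ_[p]) : ℚ_[p]) = x * (p : ℚ_[p]) ^ (-x.valuation) := by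
  simp [padicUnitPart, hx]

/-- Digit agreement, assuming `x.valuation ≤ i`. -/
private lemma mh_digit_eq_aux (x y : ℚ_[p]) (m i : ℤ) (him : i < m)
    (h : ‖x - y‖ ≤ (p:ℝ) ^ (-m)) (hx : x ≠ 0) (hy : y ≠ 0) (hvx : x.valuation ≤ i) :
    padicDigit p x i = padicDigit p y i := by
  set v := x.valuation with hv
  -- ‖x‖ > ‖x - y‖
  have hxnorm : ‖x‖ = (p:ℝ) ^ (-v) := Padic.norm_eq_zpow_neg_valuation hx
  have hlt : ‖x - y‖ < ‖x‖ := by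
    rw [hxnorm]
    refine lt_of_le_of_lt h ?_
    apply zpow_lt_zpow_right₀ mh_one_lt_p
    omega
  have hyx : ‖y‖ = ‖x‖ := by
    have : ‖y‖ = ‖x + (y - x)‖ := by ring_nf
    rw [this, Padic.add_eq_max_of_ne (by rw [norm_sub_rev]; exact ne_of_gt hlt)]
    rw [norm_sub_rev]
    exact max_eq_left (le_of_lt hlt)
  have hvy : y.valuation = v := by
    have h1 : (p:ℝ) ^ (-y.valuation) = (p:ℝ) ^ (-v) := by
      rw [← Padic.norm_eq_zpow_neg_valuation hy, hyx, hxnorm]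
    have := zpow_right_injective₀ mh_p_pos (ne_of_gt mh_one_lt_p) h1
    omega
  set u := padicUnitPart p x
  set w := padicUnitPart p y
  have hsub : ((u - w : ℤ_[p]) : ℚ_[p]) = (x - y) * (p : ℚ_[p]) ^ (-v) := by
    push_cast
    rw [mh_unitPart_coe x hx, mh_unitPart_coe y hy, hvy, ← hv]
    ring
  have hnorm : ∀ n : ℕ, (n : ℤ) ≤ m - v → ‖u - w‖ ≤ (p:ℝ) ^ (-n : ℤ) := by
    intro n hn
    rw [PadicInt.norm_def, hsub, norm_mul, Padic.norm_p_zpow]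
    calc ‖x - y‖ * (p:ℝ) ^ (- -v)
        ≤ (p:ℝ) ^ (-m) * (p:ℝ) ^ v := by
          rw [neg_neg]
          exact mul_le_mul_of_nonneg_right h (zpow_nonneg (le_of_lt mh_p_pos) _)
      _ = (p:ℝ) ^ (v - m) := by
          rw [← zpow_add₀ (ne_of_gt mh_p_pos)]; ring_nf
      _ ≤ (p:ℝ) ^ (-n : ℤ) := by
          apply zpow_le_zpow_right₀ (le_of_lt mh_one_lt_p)
          omega
  have hk : ((i - v).toNat : ℤ) = i - v := Int.toNat_of_nonneg (by omega)
  have ha1 : u.appr (i - v).toNat = w.appr (i - v).toNat :=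
    mh_appr_eq_appr u w _ (hnorm _ (by omega))
  have ha2 : u.appr ((i - v).toNat + 1) = w.appr ((i - v).toNat + 1) :=
    mh_appr_eq_appr u w _ (hnorm _ (by push_cast; omega))
  unfold padicDigit
  rw [if_neg hx, if_neg hy, if_pos hvx, if_pos (by rw [hvy]; exact hvx), hvy, ← hv, ha1, ha2]

private lemma mh_digit_eq (x y : ℚ_[p]) (m i : ℤ) (him : i < m)
    (h : ‖x - y‖ ≤ (p:ℝ) ^ (-m)) : padicDigit p x i = padicDigit p y i := by
  by_cases hx : x = 0
  · subst hx
    rw [zero_sub, norm_neg] at h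
    rw [mh_digit_zero_of_norm y m i h him]
    simp [padicDigit]
  by_cases hy : y = 0
  · subst hy
    rw [sub_zero] at h
    rw [mh_digit_zero_of_norm x m i h him]
    simp [padicDigit]
  rcases le_or_gt x.valuation i with hvx | hvx
  · exact mh_digit_eq_aux x y m i him h hx hy hvx
  rcases le_or_gt y.valuation i with hvy | hvy
  · exact (mh_digit_eq_aux y x m i him (by rwa [norm_sub_rev]) hy hx hvy).symm
  · rw [mh_digit_zero x i hvx, mh_digit_zero y i hvy]

private lemma mh_summable_aux (v : ℤ) (f : ℤ → ℝ)
    (h0 : ∀ i < v, f i = 0) (hb : ∀ i, |f i| ≤ (p:ℝ) * (p:ℝ) ^ (-i - 1)) :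
    Summable f := by
  have hinj : Function.Injective (fun k : ℕ => v + (k:ℤ)) := by
    intro a b hab
    simpa using hab
  have hrange : ∀ i ∉ Set.range (fun k : ℕ => v + (k:ℤ)), f i = 0 := by
    intro i hi
    apply h0
    by_contra hlt
    push_neg at hlt
    exact hi ⟨(i - v).toNat, by simp; omega⟩
  rw [← hinj.summable_iff hrange]
  have hgeom : Summable (fun k : ℕ => ((p:ℝ) * (p:ℝ) ^ (-v - 1)) * ((p:ℝ)⁻¹) ^ k) :=
    (summable_geometric_of_lt_one (by positivity)
      (inv_lt_one_of_one_lt₀ mh_one_lt_p)).mul_left _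
  apply Summable.of_norm_bounded hgeom
  intro k
  simp only [Function.comp_apply, Real.norm_eq_abs]
  calc |f (v + k)| ≤ (p:ℝ) * (p:ℝ) ^ (-(v + (k:ℤ)) - 1) := hb _
    _ = (p:ℝ) * (p:ℝ) ^ (-v - 1) * ((p:ℝ)⁻¹) ^ k := by
        rw [mul_assoc, inv_pow, ← zpow_natCast (p:ℝ), ← zpow_neg,
          ← zpow_add₀ (ne_of_gt mh_p_pos)]
        ring_nf

private lemma mh_tsum_bound (m : ℤ) (f : ℤ → ℝ) (hs : Summable f)
    (h0 : ∀ i < m, f i = 0) (hb : ∀ i, |f i| ≤ ((p:ℝ) - 1) * (p:ℝ) ^ (-i - 1)) :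
    |∑' i, f i| ≤ (p:ℝ) ^ (-m) := by
  have habs : |∑' i, f i| ≤ ∑' i, |f i| := by
    simpa using norm_tsum_le_tsum_norm (f := f) (by simpa using hs.abs)
  refine le_trans habs ?_
  have hinj : Function.Injective (fun k : ℕ => m + (k:ℤ)) := by
    intro a b hab
    simpa using hab
  have hrange : Function.support (fun i => |f i|) ⊆ Set.range (fun k : ℕ => m + (k:ℤ)) := by
    intro i hi
    by_contra hmem
    apply hi
    have : i < m := by
      by_contra hlt
      push_neg at hlt
      exact hmem ⟨(i - m).toNat, by simp; omega⟩
    simp [h0 i this]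
  rw [← hinj.tsum_eq hrange]
  have hgeom : Summable (fun k : ℕ => (((p:ℝ) - 1) * (p:ℝ) ^ (-m - 1)) * ((p:ℝ)⁻¹) ^ k) :=
    (summable_geometric_of_lt_one (by positivity)
      (inv_lt_one_of_one_lt₀ mh_one_lt_p)).mul_left _
  have hsum2 : Summable fun k : ℕ => |f (m + (k:ℤ))| :=
    ((hinj.summable_iff (by
      intro i hi
      rcases le_or_gt m i with hle | hlt
      · exact absurd ⟨(i - m).toNat, by simp; omega⟩ hi
      · simp [h0 i hlt])).mpr hs.abs)
  have hle : ∀ k : ℕ, |f (m + (k:ℤ))| ≤ (((p:ℝ) - 1) * (p:ℝ) ^ (-m - 1)) * ((p:ℝ)⁻¹) ^ k := by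
    intro k
    calc |f (m + k)| ≤ ((p:ℝ) - 1) * (p:ℝ) ^ (-(m + (k:ℤ)) - 1) := hb _
      _ = ((p:ℝ) - 1) * (p:ℝ) ^ (-m - 1) * ((p:ℝ)⁻¹) ^ k := by
          rw [mul_assoc, inv_pow, ← zpow_natCast (p:ℝ), ← zpow_neg,
            ← zpow_add₀ (ne_of_gt mh_p_pos)]
          ring_nf
  refine le_trans (Summable.tsum_le_tsum hle hsum2 hgeom) ?_
  rw [tsum_mul_left, tsum_geometric_of_lt_one (by positivity) (inv_lt_one_of_one_lt₀ mh_one_lt_p)]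
  have hp1 : (p:ℝ) - 1 ≠ 0 := by have := mh_one_lt_p (p := p); linarith
  have hpne : (p:ℝ) ≠ 0 := ne_of_gt mh_p_pos
  have hinv : (1 - (p:ℝ)⁻¹)⁻¹ = (p:ℝ) / ((p:ℝ) - 1) := by
    rw [show (1 - (p:ℝ)⁻¹) = ((p:ℝ) - 1) / p by field_simp, inv_div]
  rw [hinv]
  have : ((p:ℝ) - 1) * (p:ℝ) ^ (-m - 1) * ((p:ℝ) / ((p:ℝ) - 1)) = (p:ℝ) ^ (-m - 1) * (p:ℝ) := by
    field_simp
  rw [this, ← zpow_add_one₀ (ne_of_gt mh_p_pos), sub_add_cancel]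

private lemma mh_summable_digit (x : ℚ_[p]) :
    Summable (fun i : ℤ => (padicDigit p x i : ℝ) * (p:ℝ) ^ (-i - 1)) := by
  apply mh_summable_aux (p := p) x.valuation
  · intro i hi
    rw [mh_digit_zero x i hi]
    simp
  · intro i
    rw [abs_of_nonneg (by positivity)]
    apply mul_le_mul_of_nonneg_right _ (zpow_nonneg (le_of_lt mh_p_pos) _)
    exact_mod_cast le_of_lt (mh_digit_lt x i)

end MonnaHolderAux

/-- the Monna map satisfies the Hölder inequality `|ρ(x)-ρ(y)| ≤ |x-y|_p`. -/
theorem monna_holder (p : ℕ) [Fact p.Prime] (x y : ℚ_[p]) :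
    |monna p x - monna p y| ≤ ‖x - y‖ := by
  by_cases hxy : x = y
  · simp [hxy, norm_nonneg]
  have hne : x - y ≠ 0 := sub_ne_zero.mpr hxy
  set m := (x - y).valuation with hm
  have hnorm : ‖x - y‖ = (p:ℝ) ^ (-m) := Padic.norm_eq_zpow_neg_valuation hne
  have hsx := mh_summable_digit (p := p) x
  have hsy := mh_summable_digit (p := p) y
  rw [monna, monna, ← Summable.tsum_sub hsx hsy, hnorm]
  apply mh_tsum_bound m _ (hsx.sub hsy)
  · intro i hi
    rw [mh_digit_eq x y m i hi (le_of_eq hnorm)]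
    ring
  · intro i
    have hdx := mh_digit_lt x i
    have hdy := mh_digit_lt y i
    have hdx' : (padicDigit p x i : ℝ) ≤ (p:ℝ) - 1 := by
      have : (padicDigit p x i : ℝ) + 1 ≤ (p:ℝ) := by exact_mod_cast hdx
      linarith
    have hdy' : (padicDigit p y i : ℝ) ≤ (p:ℝ) - 1 := by
      have : (padicDigit p y i : ℝ) + 1 ≤ (p:ℝ) := by exact_mod_cast hdy
      linarith
    have hfactor : (padicDigit p x i : ℝ) * (p:ℝ) ^ (-i - 1)
        - (padicDigit p y i : ℝ) * (p:ℝ) ^ (-i - 1)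
        = ((padicDigit p x i : ℝ) - (padicDigit p y i : ℝ)) * (p:ℝ) ^ (-i - 1) := by ring
    rw [hfactor, abs_mul, abs_of_nonneg (zpow_nonneg (le_of_lt mh_p_pos) _)]
    apply mul_le_mul_of_nonneg_right _ (zpow_nonneg (le_of_lt mh_p_pos) _)
    rw [abs_sub_le_iff]
    constructor
    · have : (0:ℝ) ≤ (padicDigit p y i : ℝ) := Nat.cast_nonneg _
      linarith
    · have : (0:ℝ) ≤ (padicDigit p x i : ℝ) := Nat.cast_nonneg _
      linarith
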